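/- For every natural number m ≥ 1, the broadcast domination number of the sunlet graph with degree m on the triangle, S_3^m, equals m + 1. -/

import Mathlib

open SimpleGraph Finset

/-- A dominating broadcast on `G`: every vertex is within distance `f u` of some
vertex `u` with `f u ≥ 1` (distances are measured by the graph metric `G.dist`). -/
def IsDominatingBroadcast {V : Type*} (G : SimpleGraph V) (f : V → ℕ) : Prop :=
  ∀ v : V, ∃ u : V, 1 ≤ f u ∧ G.dist u v ≤ f u

/-- The broadcast domination number of `G`: the minimum cost (sum of strengths)
of a dominating broadcast on `G`. -/
noncomputable def gammaB (V : Type*) [Fintype V] (G : SimpleGraph V) : ℕ :=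
  sInf {c : ℕ | ∃ f : V → ℕ, IsDominatingBroadcast G f ∧ ∑ v, f v = c}

/-- The sunlet graph with degree `n` on the cycle `C_m`, `S_m^n`: a path on `n`
new vertices (a branch) is attached to each vertex of the cycle `C_m`.
The vertex `(i, 0)` is the `i`-th base vertex (on the cycle) and, for
`1 ≤ j ≤ n`, the vertex `(i, j)` is the `j`-th pendant vertex of the branch
attached at `(i, 0)`. -/
def sunletDeg (m n : ℕ) : SimpleGraph (Fin m × Fin (n + 1)) :=
  SimpleGraph.fromRel (fun a b =>
    (a.2 = 0 ∧ b.2 = 0 ∧ (SimpleGraph.cycleGraph m).Adj a.1 b.1) ∨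
    (a.1 = b.1 ∧ (a.2 : ℕ) + 1 = (b.2 : ℕ)))

namespace SunletAux

variable {m : ℕ}

/-- distance formula -/
def D (a b : Fin 3 × Fin (m + 1)) : ℕ :=
  if a.1 = b.1 then Nat.dist (a.2 : ℕ) (b.2 : ℕ) else (a.2 : ℕ) + (b.2 : ℕ) + 1

lemma adj_iff {a b : Fin 3 × Fin (m + 1)} :
    (sunletDeg 3 m).Adj a b ↔
      ((a.2 : ℕ) = 0 ∧ (b.2 : ℕ) = 0 ∧ a.1 ≠ b.1) ∨
      (a.1 = b.1 ∧ ((a.2 : ℕ) + 1 = (b.2 : ℕ) ∨ (b.2 : ℕ) + 1 = (a.2 : ℕ))) := by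
  unfold sunletDeg
  rw [SimpleGraph.fromRel_adj, SimpleGraph.cycleGraph_three_eq_top]
  simp only [SimpleGraph.top_adj]
  constructor
  · rintro ⟨hne, (⟨h1, h2, h3⟩ | ⟨h1, h2⟩) | (⟨h1, h2, h3⟩ | ⟨h1, h2⟩)⟩
    · exact Or.inl ⟨by simp [h1], by simp [h2], h3⟩
    · exact Or.inr ⟨h1, Or.inl h2⟩
    · exact Or.inl ⟨by simp [h2], by simp [h1], Ne.symm h3⟩
    · exact Or.inr ⟨h1.symm, Or.inr h2⟩
  · rintro (⟨h1, h2, h3⟩ | ⟨h1, h2 | h2⟩)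
    · refine ⟨fun h => h3 (by rw [h]), Or.inl (Or.inl ⟨?_, ?_, h3⟩)⟩
      · exact Fin.ext (by simpa using h1)
      · exact Fin.ext (by simpa using h2)
    · exact ⟨fun h => by simp [h] at h2, Or.inl (Or.inr ⟨h1, h2⟩)⟩
    · exact ⟨fun h => by simp [h] at h2, Or.inr (Or.inr ⟨h1.symm, h2⟩)⟩

lemma D_self (a : Fin 3 × Fin (m + 1)) : D a a = 0 := by
  simp [D, Nat.dist_self]

lemma D_eq_zero {a b : Fin 3 × Fin (m + 1)} (h : D a b = 0) : a = b := by
  unfold D at h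
  by_cases h1 : a.1 = b.1
  · rw [if_pos h1] at h
    exact Prod.ext h1 (Fin.ext (Nat.eq_of_dist_eq_zero h))
  · rw [if_neg h1] at h
    omega

lemma D_lipschitz {a c b : Fin 3 × Fin (m + 1)} (h : (sunletDeg 3 m).Adj a c) :
    D a b ≤ D c b + 1 := by
  rw [adj_iff] at h
  unfold D
  rcases h with ⟨h1, h2, h3⟩ | ⟨h1, h2⟩ <;>
    split_ifs with g1 g2 g2 <;>
    simp_all [Nat.dist] <;> try omega

lemma step {a b : Fin 3 × Fin (m + 1)} (hab : a ≠ b) :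
    ∃ c, (sunletDeg 3 m).Adj a c ∧ D c b + 1 ≤ D a b := by
  obtain ⟨i, x⟩ := a
  obtain ⟨k, y⟩ := b
  by_cases hik : i = k
  · subst hik
    have hxy : (x : ℕ) ≠ (y : ℕ) := fun h => hab (by simp [Fin.ext_iff, h])
    rcases Nat.lt_or_ge (x : ℕ) (y : ℕ) with h | h
    · refine ⟨(i, ⟨(x : ℕ) + 1, by omega⟩), ?_, ?_⟩
      · rw [adj_iff]; exact Or.inr ⟨rfl, Or.inl rfl⟩
      · simp [D, Nat.dist]; omega
    · have hxpos : 0 < (x : ℕ) := by omega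
      refine ⟨(i, ⟨(x : ℕ) - 1, by omega⟩), ?_, ?_⟩
      · rw [adj_iff]; refine Or.inr ⟨rfl, Or.inr ?_⟩; simp; omega
      · simp [D, Nat.dist]; omega
  · by_cases hx : (x : ℕ) = 0
    · refine ⟨(k, ⟨0, by omega⟩), ?_, ?_⟩
      · rw [adj_iff]; exact Or.inl ⟨hx, rfl, hik⟩
      · simp [D, Nat.dist, hik, hx]
    · refine ⟨(i, ⟨(x : ℕ) - 1, by omega⟩), ?_, ?_⟩
      · rw [adj_iff]; refine Or.inr ⟨rfl, Or.inr ?_⟩; simp; omega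
      · show D _ _ + 1 ≤ D _ _; unfold D; rw [if_neg hik, if_neg hik]; simp only [Fin.val_mk]; omega

lemma exists_walk : ∀ (n : ℕ) (a b : Fin 3 × Fin (m + 1)), D a b ≤ n →
    ∃ w : (sunletDeg 3 m).Walk a b, w.length ≤ n
  | 0, a, b, h => by
      have : a = b := D_eq_zero (Nat.le_zero.1 h)
      subst this
      exact ⟨.nil, by simp⟩
  | n + 1, a, b, h => by
      by_cases hab : a = b
      · subst hab; exact ⟨.nil, by simp⟩
      · obtain ⟨c, hac, hc⟩ := step hab
        obtain ⟨w, hw⟩ := exists_walk n c b (by omega)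
        exact ⟨.cons hac w, by simp; omega⟩

lemma D_le_length {a b : Fin 3 × Fin (m + 1)} (p : (sunletDeg 3 m).Walk a b) :
    D a b ≤ p.length := by
  induction p with
  | nil => simp [D_self]
  | cons h q ih => simpa [Nat.add_comm] using le_trans (D_lipschitz h) (by omega)

lemma dist_eq (a b : Fin 3 × Fin (m + 1)) : (sunletDeg 3 m).dist a b = D a b := by
  obtain ⟨w, hw⟩ := exists_walk (D a b) a b le_rfl
  have h1 : (sunletDeg 3 m).dist a b ≤ D a b := le_trans (SimpleGraph.dist_le w) hw
  have hr : (sunletDeg 3 m).Reachable a b := ⟨w⟩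
  obtain ⟨p, hp⟩ := hr.exists_walk_length_eq_dist
  have h2 := D_le_length p
  omega


lemma D_base_le (i : Fin 3) (v : Fin 3 × Fin (m + 1)) : D (i, 0) v ≤ m + 1 := by
  have h2 := v.2.isLt
  unfold D
  split_ifs <;> simp [Nat.dist] <;> omega

lemma D_base_base {u v : Fin 3 × Fin (m + 1)} (hu : u.2 = 0) (hv : v.2 = 0) :
    D u v ≤ 1 := by
  have h2 : (u.2 : ℕ) = 0 := by simp [hu]
  have h3 : (v.2 : ℕ) = 0 := by simp [hv]
  unfold D
  split_ifs <;> simp [Nat.dist, h2, h3]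

lemma cardA (x₀ : Fin (m + 1)) (r : ℕ) :
    (Finset.univ.filter (fun j : Fin (m + 1) => Nat.dist (x₀ : ℕ) (j : ℕ) ≤ r)).card
      ≤ ((x₀ : ℕ) + r + 1) - ((x₀ : ℕ) - r) := by
  have := Finset.card_le_card_of_injOn (fun j : Fin (m + 1) => (j : ℕ))
    (s := Finset.univ.filter (fun j : Fin (m + 1) => Nat.dist (x₀ : ℕ) (j : ℕ) ≤ r))
    (t := Finset.Icc ((x₀ : ℕ) - r) ((x₀ : ℕ) + r)) ?_ ?_
  · simpa [Nat.card_Icc] using this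
  · intro j hj
    simp only [Finset.mem_coe, Finset.mem_filter, Finset.mem_univ, true_and, Nat.dist] at hj
    simp only [Finset.mem_coe, Finset.mem_Icc]
    have hj2 := (Finset.mem_filter.1 hj).2
    omega
  · exact Fin.val_injective.injOn

lemma cardB (x₀ : Fin (m + 1)) (r : ℕ) :
    (Finset.univ.filter (fun j : Fin (m + 1) => (x₀ : ℕ) + (j : ℕ) + 1 ≤ r)).card
      ≤ r - (x₀ : ℕ) := by
  have := Finset.card_le_card_of_injOn (fun j : Fin (m + 1) => (j : ℕ))
    (s := Finset.univ.filter (fun j : Fin (m + 1) => (x₀ : ℕ) + (j : ℕ) + 1 ≤ r))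
    (t := Finset.range (r - (x₀ : ℕ))) ?_ ?_
  · simpa using this
  · intro j hj
    simp only [Finset.mem_coe, Finset.mem_filter, Finset.mem_univ, true_and] at hj
    simp only [Finset.mem_coe, Finset.mem_range]
    omega
  · exact Fin.val_injective.injOn


lemma sum3 (T : Fin 3 → ℕ) (i₀ : Fin 3) (Ab Bb : ℕ) (hA : T i₀ ≤ Ab)
    (hB : ∀ i, i ≠ i₀ → T i ≤ Bb) : ∑ i : Fin 3, T i ≤ Ab + Bb + Bb := by
  rw [Fin.sum_univ_three]
  fin_cases i₀
  · have hA' : T 0 ≤ Ab := hA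
    have h1 := hB 1 (by decide)
    have h2 := hB 2 (by decide)
    omega
  · have hA' : T 1 ≤ Ab := hA
    have h0 := hB 0 (by decide)
    have h2 := hB 2 (by decide)
    omega
  · have hA' : T 2 ≤ Ab := hA
    have h0 := hB 0 (by decide)
    have h1 := hB 1 (by decide)
    omega

lemma ball_card (i₀ : Fin 3) (x₀ : Fin (m + 1)) (r : ℕ) (hr : 1 ≤ r) :
    (Finset.univ.filter (fun v : Fin 3 × Fin (m + 1) => D (i₀, x₀) v ≤ r)).card
      ≤ 3 * r + (if x₀ = (0 : Fin (m + 1)) then 1 else 0) := by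
  have hsplit : (Finset.univ.filter (fun v : Fin 3 × Fin (m + 1) => D (i₀, x₀) v ≤ r)).card
      = ∑ i : Fin 3,
        (Finset.univ.filter (fun j : Fin (m + 1) => D (i₀, x₀) (i, j) ≤ r)).card := by
    simp only [Finset.card_filter]
    rw [Fintype.sum_prod_type]
  have heqA : (Finset.univ.filter (fun j : Fin (m + 1) => D (i₀, x₀) (i₀, j) ≤ r))
      = Finset.univ.filter (fun j : Fin (m + 1) => Nat.dist (x₀ : ℕ) (j : ℕ) ≤ r) := by
    apply Finset.filter_congr
    intro j _
    simp [D]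
  have heqB : ∀ i : Fin 3, i₀ ≠ i →
      (Finset.univ.filter (fun j : Fin (m + 1) => D (i₀, x₀) (i, j) ≤ r))
        = Finset.univ.filter (fun j : Fin (m + 1) => (x₀ : ℕ) + (j : ℕ) + 1 ≤ r) := by
    intro i hi
    apply Finset.filter_congr
    intro j _
    simp [D, hi]
  have hx : (x₀ = (0 : Fin (m + 1))) ↔ (x₀ : ℕ) = 0 :=
    ⟨fun h => by rw [h, Fin.val_zero], fun h => Fin.ext (by rw [h, Fin.val_zero])⟩
  have hA := cardA x₀ r
  have hB := cardB x₀ r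
  have key : ∀ a b c : ℕ,
      a ≤ ((x₀ : ℕ) + r + 1) - ((x₀ : ℕ) - r) → b ≤ r - (x₀ : ℕ) → c ≤ r - (x₀ : ℕ) →
      a + b + c ≤ 3 * r + (if x₀ = (0 : Fin (m + 1)) then 1 else 0) := by
    intro a b c ha hb hc
    by_cases h0 : x₀ = (0 : Fin (m + 1))
    · rw [if_pos h0]
      have : (x₀ : ℕ) = 0 := hx.1 h0
      omega
    · rw [if_neg h0]
      have : (x₀ : ℕ) ≠ 0 := fun h => h0 (hx.2 h)
      omega
  rw [hsplit]
  have hTA : (Finset.univ.filter (fun j : Fin (m + 1) => D (i₀, x₀) (i₀, j) ≤ r)).card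
      ≤ ((x₀ : ℕ) + r + 1) - ((x₀ : ℕ) - r) :=
    le_of_eq_of_le (congrArg Finset.card heqA) hA
  have hTB : ∀ i : Fin 3, i ≠ i₀ →
      (Finset.univ.filter (fun j : Fin (m + 1) => D (i₀, x₀) (i, j) ≤ r)).card
        ≤ r - (x₀ : ℕ) :=
    fun i hi => le_of_eq_of_le (congrArg Finset.card (heqB i (Ne.symm hi))) hB
  calc ∑ i : Fin 3, (Finset.univ.filter (fun j : Fin (m + 1) => D (i₀, x₀) (i, j) ≤ r)).card
      ≤ (((x₀ : ℕ) + r + 1) - ((x₀ : ℕ) - r)) + (r - (x₀ : ℕ)) + (r - (x₀ : ℕ)) :=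
        sum3 _ i₀ _ _ hTA hTB
    _ ≤ _ := key _ _ _ le_rfl le_rfl le_rfl

end SunletAux

open SunletAux

/-- For every natural number `m ≥ 1`, the broadcast domination number of the
sunlet graph with degree `m` on the triangle, `S_3^m`, equals `m + 1`. -/
theorem gammaB_sunletDeg_three (m : ℕ) (hm : 1 ≤ m) :
    gammaB (Fin 3 × Fin (m + 1)) (sunletDeg 3 m) = m + 1 := by
  have hmem : (m + 1) ∈ {c : ℕ | ∃ f : Fin 3 × Fin (m+1) → ℕ,
      IsDominatingBroadcast (sunletDeg 3 m) f ∧ ∑ v, f v = c} := by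
    refine ⟨fun v => if v = ((0 : Fin 3), (0 : Fin (m+1))) then m + 1 else 0, ?_, ?_⟩
    · intro v
      refine ⟨((0 : Fin 3), (0 : Fin (m+1))), by simp, ?_⟩
      simp only [if_pos rfl]
      rw [dist_eq]
      exact D_base_le 0 v
    · rw [Finset.sum_ite_eq' Finset.univ ((0 : Fin 3), (0 : Fin (m+1)))
        (fun _ => m + 1)]
      simp
  refine le_antisymm (Nat.sInf_le hmem) (le_csInf ⟨_, hmem⟩ ?_)
  rintro c ⟨f, hf, rfl⟩
  classical
  set S : Finset (Fin 3 × Fin (m+1)) := Finset.univ.filter (fun u => 1 ≤ f u) with hS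
  set k : ℕ := (S.filter (fun u => u.2 = 0)).card with hk
  set mult : Fin 3 × Fin (m+1) → ℕ :=
    fun v => (S.filter (fun u => D u v ≤ f u)).card with hmult
  have hmult1 : ∀ v, 1 ≤ mult v := by
    intro v
    obtain ⟨u, hu1, hu2⟩ := hf v
    rw [dist_eq] at hu2
    have : u ∈ S.filter (fun u => D u v ≤ f u) := by
      simp only [hS, Finset.mem_filter, Finset.mem_univ, true_and]
      exact ⟨hu1, hu2⟩
    exact Finset.card_pos.2 ⟨u, this⟩
  have hmultbase : ∀ v : Fin 3 × Fin (m+1), v.2 = 0 → k ≤ mult v := by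
    intro v hv
    apply Finset.card_le_card
    intro u hu
    simp only [hS, Finset.mem_filter, Finset.mem_univ, true_and] at hu ⊢
    refine ⟨hu.1, ?_⟩
    have h1 : 1 ≤ f u := hu.1
    have hD : D u v ≤ 1 := D_base_base hu.2 hv
    omega
  have hdc : ∑ v : Fin 3 × Fin (m+1), mult v
      = ∑ u ∈ S, (Finset.univ.filter (fun v => D u v ≤ f u)).card := by
    simp only [hmult, Finset.card_filter]
    rw [Finset.sum_comm]
  have hup : ∑ u ∈ S, (Finset.univ.filter (fun v => D u v ≤ f u)).card
      ≤ 3 * (∑ v, f v) + k := by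
    calc ∑ u ∈ S, (Finset.univ.filter (fun v => D u v ≤ f u)).card
        ≤ ∑ u ∈ S, (3 * f u + (if u.2 = (0 : Fin (m+1)) then 1 else 0)) := by
          apply Finset.sum_le_sum
          intro u hu
          have hr : 1 ≤ f u := by
            have := Finset.mem_filter.1 hu
            exact this.2
          exact ball_card u.1 u.2 (f u) hr
      _ = 3 * (∑ u ∈ S, f u) + k := by
          rw [Finset.sum_add_distrib, Finset.mul_sum, hk, Finset.card_filter]
      _ ≤ 3 * (∑ v, f v) + k := by
          have : ∑ u ∈ S, f u ≤ ∑ v, f v :=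
            Finset.sum_le_sum_of_subset (Finset.subset_univ S)
          omega
  have hlowsum : 3 * (max k 1) + 3 * m ≤ ∑ v : Fin 3 × Fin (m+1), mult v := by
    have hpt : ∀ v : Fin 3 × Fin (m+1),
        (if v.2 = (0 : Fin (m+1)) then max k 1 else 1) ≤ mult v := by
      intro v
      split_ifs with h
      · exact max_le (hmultbase v h) (hmult1 v)
      · exact hmult1 v
    calc 3 * (max k 1) + 3 * m
        = ∑ v : Fin 3 × Fin (m+1), (if v.2 = (0 : Fin (m+1)) then max k 1 else 1) := by
          rw [Fintype.sum_prod_type]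
          have hin : ∀ i : Fin 3, (∑ j : Fin (m+1),
              (if j = (0 : Fin (m+1)) then max k 1 else 1)) = max k 1 + m := by
            intro i
            rw [Fin.sum_univ_succ]
            simp [Fin.succ_ne_zero]
          rw [Fin.sum_univ_three, hin 0]
          ring
      _ ≤ ∑ v : Fin 3 × Fin (m+1), mult v := Finset.sum_le_sum (fun v _ => hpt v)
  have hK1 : 1 ≤ max k 1 := le_max_right k 1
  have hKk : k ≤ max k 1 := le_max_left k 1
  omega
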